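/- Let A be the m×m downshift matrix with m ≥ 2. Then the relative Frobenius-norm distance from A to the set of Hermitian positive semidefinite matrices equals √3/2. -/

import Mathlib

open Matrix
open scoped ComplexOrder

/-- The `m × m` downshift matrix: ones on the subdiagonal, zeros elsewhere. -/
def downshift (m : ℕ) : Matrix (Fin m) (Fin m) ℂ :=
  Matrix.of fun i j => if (i : ℕ) = (j : ℕ) + 1 then 1 else 0

/-- The Frobenius norm of a matrix. -/
noncomputable def frob {m : ℕ} (M : Matrix (Fin m) (Fin m) ℂ) : ℝ :=
  Real.sqrt (∑ i, ∑ j, ‖M i j‖ ^ 2)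

noncomputable def fsq {m : ℕ} (M : Matrix (Fin m) (Fin m) ℂ) : ℝ :=
  (Matrix.trace (Mᴴ * M)).re

lemma fsq_eq_sum {m : ℕ} (M : Matrix (Fin m) (Fin m) ℂ) :
    fsq M = ∑ i, ∑ j, ‖M i j‖ ^ 2 := by
  rw [fsq, Matrix.trace]
  simp only [Matrix.diag_apply, Matrix.mul_apply, Matrix.conjTranspose_apply, Complex.re_sum]
  rw [Finset.sum_comm]
  congr 1; ext i; congr 1; ext j
  rw [Complex.star_def, mul_comm, Complex.mul_conj']
  simp [Complex.normSq_eq_norm_sq, ← Complex.ofReal_pow]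

lemma fsq_nonneg {m : ℕ} (M : Matrix (Fin m) (Fin m) ℂ) : 0 ≤ fsq M := by
  rw [fsq_eq_sum]
  positivity

lemma fsq_neg {m : ℕ} (M : Matrix (Fin m) (Fin m) ℂ) : fsq (-M) = fsq M := by
  simp [fsq_eq_sum]

lemma frob_eq {m : ℕ} (M : Matrix (Fin m) (Fin m) ℂ) :
    Real.sqrt (∑ i, ∑ j, ‖M i j‖ ^ 2) = Real.sqrt (fsq M) := by rw [fsq_eq_sum]



-- expansion for a sum where cross terms cancel (Hermitian + skew-Hermitian)
lemma fsq_add_herm_skew {m : ℕ} {X Y : Matrix (Fin m) (Fin m) ℂ}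
    (hX : Xᴴ = X) (hY : Yᴴ = -Y) : fsq (X + Y) = fsq X + fsq Y := by
  unfold fsq
  rw [conjTranspose_add, add_mul, mul_add, mul_add, trace_add, trace_add, trace_add, hX, hY]
  have : Matrix.trace (X * Y) = Matrix.trace (Y * X) := trace_mul_comm X Y
  simp only [Matrix.neg_mul, trace_neg, this]
  ring_nf
  simp only [Complex.sub_re, Complex.neg_re]
  ring

-- expansion for difference of Hermitians
lemma fsq_sub_herm {m : ℕ} {X Y : Matrix (Fin m) (Fin m) ℂ}
    (hX : Xᴴ = X) (hY : Yᴴ = Y) :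
    fsq (X - Y) = fsq X + fsq Y - 2 * (Matrix.trace (X * Y)).re := by
  unfold fsq
  rw [conjTranspose_sub, sub_mul, mul_sub, mul_sub, trace_sub, trace_sub, trace_sub, hX, hY]
  have : Matrix.trace (Y * X) = Matrix.trace (X * Y) := trace_mul_comm Y X
  rw [this]
  simp only [Complex.sub_re]
  ring

lemma trace_re_nonneg_of_psd {m : ℕ} {P : Matrix (Fin m) (Fin m) ℂ}
    (hP : P.PosSemidef) : 0 ≤ (Matrix.trace P).re := by
  have h : ∀ i, 0 ≤ P i i := by
    intro i
    exact hP.diag_nonneg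
  rw [Matrix.trace, Complex.re_sum]
  exact Finset.sum_nonneg fun i _ => ((Complex.le_def.mp (h i)).1)

open scoped Matrix.Norms.L2Operator MatrixOrder in
lemma re_trace_mul_psd_nonneg {m : ℕ} {H P : Matrix (Fin m) (Fin m) ℂ}
    (hH : H.PosSemidef) (hP : P.PosSemidef) : 0 ≤ (Matrix.trace (H * P)).re := by
  obtain ⟨R, hRpsd, hRR⟩ : ∃ R : Matrix (Fin m) (Fin m) ℂ, R.PosSemidef ∧ R * R = P :=
    ⟨CFC.sqrt P, Matrix.nonneg_iff_posSemidef.mp (CFC.sqrt_nonneg P),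
      CFC.sqrt_mul_sqrt_self P hP.nonneg⟩
  have h1 : H * P = H * R * R := by rw [Matrix.mul_assoc, hRR]
  have h2 : Matrix.trace (H * R * R) = Matrix.trace (R * (H * R)) :=
    trace_mul_comm _ _
  have h3 : R * (H * R) = Rᴴ * H * R := by
    rw [hRpsd.1, Matrix.mul_assoc]
  rw [h1, h2, h3]
  exact trace_re_nonneg_of_psd (hH.conjTranspose_mul_mul_same _)

open scoped Matrix.Norms.L2Operator MatrixOrder in
lemma key {m : ℕ} {S J : Matrix (Fin m) (Fin m) ℂ} (hS : S.IsHermitian)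
    (hJh : Jᴴ = J) (hJJ : J * J = 1) (hJS : J * S * J = -S) :
    ∃ P : Matrix (Fin m) (Fin m) ℂ, P.PosSemidef ∧ fsq (S - P) = fsq S / 2 ∧
      ∀ H : Matrix (Fin m) (Fin m) ℂ, H.PosSemidef → fsq S / 2 ≤ fsq (S - H) := by
  set U : Matrix (Fin m) (Fin m) ℂ := (hS.eigenvectorUnitary : Matrix (Fin m) (Fin m) ℂ) with hU
  have hU1 : star U * U = 1 := Matrix.mem_unitaryGroup_iff'.mp hS.eigenvectorUnitary.2
  have hcancel : ∀ X : Matrix (Fin m) (Fin m) ℂ, star U * (U * X) = X := fun X => by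
    rw [← Matrix.mul_assoc, hU1, Matrix.one_mul]
  have hJc : ∀ X : Matrix (Fin m) (Fin m) ℂ, J * (J * X) = X := fun X => by
    rw [← Matrix.mul_assoc, hJJ, Matrix.one_mul]
  set ev : Fin m → ℝ := hS.eigenvalues with hev
  set Dp : Matrix (Fin m) (Fin m) ℂ := Matrix.diagonal (fun i => ((max (ev i) 0 : ℝ) : ℂ)) with hDp
  set Dm : Matrix (Fin m) (Fin m) ℂ :=
    Matrix.diagonal (fun i => ((max (-(ev i)) 0 : ℝ) : ℂ)) with hDm
  set Sp : Matrix (Fin m) (Fin m) ℂ := U * Dp * star U with hSpdef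
  set Sm : Matrix (Fin m) (Fin m) ℂ := U * Dm * star U with hSmdef
  -- Sp - Sm = S
  have hsub : Sp - Sm = S := by
    have hfun : (fun i : Fin m => (↑(max (ev i) 0) - ↑(max (-(ev i)) 0) : ℂ)) =
        RCLike.ofReal ∘ hS.eigenvalues := by
      funext i
      have h5 : max (ev i) 0 - max (-(ev i)) 0 = ev i := by
        rcases le_total (ev i) 0 with h | h
        · rw [max_eq_right h, max_eq_left (neg_nonneg.mpr h)]; ring
        · rw [max_eq_left h, max_eq_right (neg_nonpos.mpr h)]; ring
      show (↑(max (ev i) 0) - ↑(max (-(ev i)) 0) : ℂ) = RCLike.ofReal (hS.eigenvalues i)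
      rw [← Complex.ofReal_sub, h5]
      rfl
    have hdiag : Dp - Dm = Matrix.diagonal (RCLike.ofReal ∘ hS.eigenvalues) := by
      rw [hDp, hDm, Matrix.diagonal_sub, hfun]
    rw [hSpdef, hSmdef, ← Matrix.sub_mul, ← Matrix.mul_sub, hdiag]
    exact hS.spectral_theorem.symm
  -- products vanish
  have hDpDm : Dp * Dm = 0 := by
    rw [hDp, hDm, Matrix.diagonal_mul_diagonal]
    have : ∀ i, (↑(max (ev i) 0) * ↑(max (-(ev i)) 0) : ℂ) = 0 := by
      intro i
      rcases le_total (ev i) 0 with h | h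
      · rw [max_eq_right h]; simp
      · rw [max_eq_right (neg_nonpos.mpr h)]; simp
    simp only [this]
    exact Matrix.diagonal_zero
  have hDmDp : Dm * Dp = 0 := by
    rw [hDp, hDm, Matrix.diagonal_mul_diagonal]
    have : ∀ i, (↑(max (-(ev i)) 0) * ↑(max (ev i) 0) : ℂ) = 0 := by
      intro i
      rcases le_total (ev i) 0 with h | h
      · rw [max_eq_right h]; simp
      · rw [max_eq_right (neg_nonpos.mpr h)]; simp
    simp only [this]
    exact Matrix.diagonal_zero
  have hmul : Sp * Sm = 0 := by
    rw [hSpdef, hSmdef]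
    have : U * Dp * star U * (U * Dm * star U) = U * (Dp * Dm) * star U := by
      simp only [Matrix.mul_assoc, hcancel]
    rw [this, hDpDm, Matrix.mul_zero, Matrix.zero_mul]
  have hmul' : Sm * Sp = 0 := by
    rw [hSpdef, hSmdef]
    have : U * Dm * star U * (U * Dp * star U) = U * (Dm * Dp) * star U := by
      simp only [Matrix.mul_assoc, hcancel]
    rw [this, hDmDp, Matrix.mul_zero, Matrix.zero_mul]
  -- positivity
  have hSpPSD : Sp.PosSemidef := by
    have hd : Matrix.PosSemidef Dp :=
      Matrix.PosSemidef.diagonal fun i => Complex.zero_le_real.mpr (le_max_right _ _)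
    have h6 := hd.mul_mul_conjTranspose_same U
    rwa [← Matrix.star_eq_conjTranspose] at h6
  have hSmPSD : Sm.PosSemidef := by
    have hd : Matrix.PosSemidef Dm :=
      Matrix.PosSemidef.diagonal fun i => Complex.zero_le_real.mpr (le_max_right _ _)
    have h6 := hd.mul_mul_conjTranspose_same U
    rwa [← Matrix.star_eq_conjTranspose] at h6
  -- abs matrix
  have habsPSD : (Sp + Sm).PosSemidef := hSpPSD.add hSmPSD
  have e1 : (Sp + Sm) * (Sp + Sm) = Sp * Sp + Sm * Sm := by
    rw [add_mul, mul_add, mul_add, hmul, hmul']; simp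
  have e2 : S * S = Sp * Sp + Sm * Sm := by
    rw [← hsub, sub_mul, mul_sub, mul_sub, hmul, hmul']; simp
  have hconjsq : ∀ X : Matrix (Fin m) (Fin m) ℂ, (J * X * J) * (J * X * J) = J * (X * X) * J := by
    intro X; simp only [Matrix.mul_assoc, hJc]
  have hJabsPSD : (J * (Sp + Sm) * J).PosSemidef := by
    have := habsPSD.mul_mul_conjTranspose_same J
    rwa [hJh] at this
  have hB2 : (J * (Sp + Sm) * J) ^ 2 = (Sp + Sm) ^ 2 := by
    rw [pow_two, pow_two, hconjsq, e1, ← e2]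
    have : J * (S * S) * J = (J * S * J) * (J * S * J) := (hconjsq S).symm
    rw [this, hJS, Matrix.neg_mul, Matrix.mul_neg, neg_neg, e2, ← e1]
  have hJabs : J * (Sp + Sm) * J = Sp + Sm := (CFC.sq_eq_sq_iff _ _ hJabsPSD.nonneg habsPSD.nonneg).mp hB2
  -- trace symmetry
  have htr0 : Matrix.trace (S * (Sp + Sm)) = 0 := by
    have t1 : Matrix.trace (J * (S * (Sp + Sm)) * J) = Matrix.trace (S * (Sp + Sm)) := by
      rw [Matrix.trace_mul_comm, ← Matrix.mul_assoc, hJJ, Matrix.one_mul]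
    have t2 : J * (S * (Sp + Sm)) * J = -(S * (Sp + Sm)) := by
      have h3 : J * (S * (Sp + Sm)) * J = (J * S * J) * (J * (Sp + Sm) * J) := by
        simp only [Matrix.mul_assoc, hJc]
      rw [h3, hJS, hJabs, Matrix.neg_mul]
    rw [t2, Matrix.trace_neg] at t1
    linear_combination (-(1:ℂ)/2) * t1
  have hSabs : S * (Sp + Sm) = Sp * Sp - Sm * Sm := by
    rw [← hsub, sub_mul, mul_add, mul_add, hmul, hmul']; simp
  have htrp : Matrix.trace (Sp * Sp) = Matrix.trace (Sm * Sm) := by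
    rw [hSabs, Matrix.trace_sub] at htr0
    linear_combination htr0
  -- fsq relations
  have hfSp : fsq Sp = (Matrix.trace (Sp * Sp)).re := by rw [fsq, hSpPSD.1]
  have hfSm : fsq Sm = (Matrix.trace (Sm * Sm)).re := by rw [fsq, hSmPSD.1]
  have hNeq : fsq Sp = fsq Sm := by rw [hfSp, hfSm, htrp]
  have hNS : fsq S = fsq Sp + fsq Sm := by
    rw [← hsub, fsq_sub_herm hSpPSD.1 hSmPSD.1, hmul, Matrix.trace_zero]
    simp
  have hhalf : fsq Sm = fsq S / 2 := by rw [hNS, hNeq]; ring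
  refine ⟨Sp, hSpPSD, ?_, ?_⟩
  · have : S - Sp = -Sm := by rw [← hsub]; abel
    rw [this, fsq_neg, hhalf]
  · intro H hH
    have hSH : S - H = (Sp - H) - Sm := by rw [← hsub]; abel
    rw [hSH, fsq_sub_herm (hSpPSD.1.sub hH.1) hSmPSD.1]
    have hcr : Matrix.trace ((Sp - H) * Sm) = -Matrix.trace (H * Sm) := by
      rw [Matrix.sub_mul, Matrix.trace_sub, hmul, Matrix.trace_zero]; ring
    rw [hcr]
    have h1 : 0 ≤ fsq (Sp - H) := fsq_nonneg _
    have h2 : 0 ≤ (Matrix.trace (H * Sm)).re := re_trace_mul_psd_nonneg hH hSmPSD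
    rw [← hhalf]
    simp only [Complex.neg_re]
    linarith
noncomputable def Smat (m : ℕ) : Matrix (Fin m) (Fin m) ℂ :=
  (2⁻¹ : ℂ) • (downshift m + (downshift m)ᴴ)

noncomputable def Kmat (m : ℕ) : Matrix (Fin m) (Fin m) ℂ :=
  (2⁻¹ : ℂ) • (downshift m - (downshift m)ᴴ)

def Jmat (m : ℕ) : Matrix (Fin m) (Fin m) ℂ :=
  Matrix.diagonal fun i => (-1 : ℂ) ^ (i : ℕ)

lemma downshift_conjTranspose (m : ℕ) :
    (downshift m)ᴴ = Matrix.of (fun i j : Fin m => if (j : ℕ) = (i : ℕ) + 1 then (1:ℂ) else 0) := by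
  ext i j
  simp only [Matrix.conjTranspose_apply, downshift, Matrix.of_apply]
  split_ifs <;> simp

lemma SK_eq (m : ℕ) : Smat m + Kmat m = downshift m := by
  rw [Smat, Kmat]; module

lemma Smat_herm (m : ℕ) : (Smat m).IsHermitian := by
  rw [Matrix.IsHermitian, Smat, Matrix.conjTranspose_smul, Matrix.conjTranspose_add,
    Matrix.conjTranspose_conjTranspose]
  rw [show (star (2⁻¹ : ℂ)) = (2⁻¹ : ℂ) by norm_num, add_comm]

lemma Kmat_skew (m : ℕ) : (Kmat m)ᴴ = -(Kmat m) := by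
  rw [Kmat, Matrix.conjTranspose_smul, Matrix.conjTranspose_sub,
    Matrix.conjTranspose_conjTranspose]
  rw [show (star (2⁻¹ : ℂ)) = (2⁻¹ : ℂ) by norm_num]
  module

lemma Jmat_herm (m : ℕ) : (Jmat m)ᴴ = Jmat m := by
  rw [Jmat, Matrix.diagonal_conjTranspose]
  refine congrArg Matrix.diagonal (funext fun i => ?_)
  show star ((-1:ℂ)^(i:ℕ)) = (-1:ℂ)^(i:ℕ)
  rw [star_pow]
  norm_num

lemma Jmat_sq (m : ℕ) : Jmat m * Jmat m = 1 := by
  rw [Jmat, Matrix.diagonal_mul_diagonal]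
  rw [show (fun i : Fin m => (-1:ℂ)^(i:ℕ) * (-1:ℂ)^(i:ℕ)) = fun _ => 1 by
    funext i; rw [← mul_pow]; norm_num]
  exact Matrix.diagonal_one

lemma JSJ (m : ℕ) : Jmat m * Smat m * Jmat m = -(Smat m) := by
  rw [Smat, Matrix.mul_smul, Matrix.smul_mul, ← smul_neg]
  congr 1
  ext i j
  rw [Jmat, Matrix.mul_diagonal, Matrix.diagonal_mul]
  rw [downshift_conjTranspose]
  simp only [Matrix.add_apply, downshift, Matrix.of_apply, Matrix.neg_apply]
  split_ifs with h1 h2 h2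
  · omega
  · rw [h1]
    norm_num
    rw [mul_comm, ← pow_add]
    exact Odd.neg_one_pow ⟨(j:ℕ), by ring⟩
  · rw [h2]
    norm_num
    rw [← pow_add]
    exact Odd.neg_one_pow ⟨(i:ℕ), by ring⟩
  · simp

lemma sum_ind {m : ℕ} (r : ℝ) :
    ∑ i : Fin m, ∑ j : Fin m, (if (i:ℕ) = (j:ℕ) + 1 then r else 0) = ((m - 1 : ℕ) : ℝ) * r := by
  have inner : ∀ j : Fin m, (∑ i : Fin m, if (i:ℕ) = (j:ℕ) + 1 then r else 0)
      = if (j:ℕ) + 1 < m then r else 0 := by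
    intro j
    by_cases h : (j:ℕ) + 1 < m
    · rw [if_pos h, Finset.sum_eq_single (⟨(j:ℕ)+1, h⟩ : Fin m)]
      · simp
      · intro b _ hb
        rw [if_neg fun hc => hb (Fin.ext hc)]
      · intro hb; exact absurd (Finset.mem_univ _) hb
    · rw [if_neg h]
      refine Finset.sum_eq_zero fun i _ => ?_
      rw [if_neg ?_]
      intro hc
      exact h (hc ▸ i.isLt)
  rw [Finset.sum_comm]
  rw [Finset.sum_congr rfl fun j _ => inner j]
  cases m with
  | zero => simp
  | succ n =>
    rw [Fin.sum_univ_castSucc]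
    simp only [Fin.coe_castSucc, Fin.val_last]
    rw [if_neg (by omega)]
    have : ∀ j : Fin n, (if (j:ℕ) + 1 < n + 1 then r else 0) = r := fun j =>
      if_pos (by omega)
    rw [Finset.sum_congr rfl fun j _ => this j]
    simp [mul_comm]

lemma fsq_downshift (m : ℕ) : fsq (downshift m) = ((m - 1 : ℕ) : ℝ) := by
  rw [fsq_eq_sum]
  have h : ∀ i j : Fin m, ‖downshift m i j‖ ^ 2
      = if (i:ℕ) = (j:ℕ) + 1 then (1:ℝ) else 0 := by
    intro i j
    simp only [downshift, Matrix.of_apply]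
    split_ifs <;> simp
  calc ∑ i, ∑ j, ‖downshift m i j‖ ^ 2
      = ∑ i : Fin m, ∑ j : Fin m, (if (i:ℕ) = (j:ℕ) + 1 then (1:ℝ) else 0) := by
        exact Finset.sum_congr rfl fun i _ => Finset.sum_congr rfl fun j _ => h i j
    _ = ((m - 1 : ℕ) : ℝ) * 1 := sum_ind 1
    _ = _ := by ring

lemma entry_sq {m : ℕ} (M : Matrix (Fin m) (Fin m) ℂ)
    (h : ∀ i j, ‖M i j‖ ^ 2 = (if (i:ℕ) = (j:ℕ) + 1 then (4⁻¹:ℝ) else 0)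
        + (if (j:ℕ) = (i:ℕ) + 1 then (4⁻¹:ℝ) else 0)) :
    fsq M = ((m - 1 : ℕ) : ℝ) / 2 := by
  rw [fsq_eq_sum]
  calc ∑ i, ∑ j, ‖M i j‖ ^ 2
      = (∑ i : Fin m, ∑ j : Fin m, (if (i:ℕ) = (j:ℕ) + 1 then (4⁻¹:ℝ) else 0))
        + ∑ i : Fin m, ∑ j : Fin m, (if (j:ℕ) = (i:ℕ) + 1 then (4⁻¹:ℝ) else 0) := by
        rw [← Finset.sum_add_distrib]
        refine Finset.sum_congr rfl fun i _ => ?_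
        rw [← Finset.sum_add_distrib]
        exact Finset.sum_congr rfl fun j _ => h i j
    _ = ((m - 1 : ℕ) : ℝ) * 4⁻¹ + ((m - 1 : ℕ) : ℝ) * 4⁻¹ := by
        rw [sum_ind]
        congr 1
        rw [Finset.sum_comm]
        exact sum_ind _
    _ = _ := by ring

lemma not_both {m : ℕ} (i j : Fin m) : ¬((i:ℕ) = (j:ℕ) + 1 ∧ (j:ℕ) = (i:ℕ) + 1) := by omega

lemma fsq_Smat (m : ℕ) : fsq (Smat m) = ((m - 1 : ℕ) : ℝ) / 2 := by
  refine entry_sq _ fun i j => ?_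
  simp only [Smat, Matrix.smul_apply, Matrix.add_apply]
  rw [downshift_conjTranspose]
  simp only [downshift, Matrix.of_apply]
  rcases Nat.lt_or_ge 0 0 with _ | _
  · omega
  · split_ifs with h1 h2 h2
    · exact absurd ⟨h1, h2⟩ (not_both i j)
    · norm_num
    · norm_num
    · norm_num

lemma fsq_Kmat (m : ℕ) : fsq (Kmat m) = ((m - 1 : ℕ) : ℝ) / 2 := by
  refine entry_sq _ fun i j => ?_
  simp only [Kmat, Matrix.smul_apply, Matrix.sub_apply]
  rw [downshift_conjTranspose]
  simp only [downshift, Matrix.of_apply]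
  split_ifs with h1 h2 h2
  · exact absurd ⟨h1, h2⟩ (not_both i j)
  · norm_num
  · norm_num
  · norm_num


theorem dist_downshift_posSemidef (m : ℕ) (hm : 2 ≤ m) :
    IsLeast {d : ℝ | ∃ H : Matrix (Fin m) (Fin m) ℂ, H.PosSemidef ∧
      d = frob (downshift m - H) / frob (downshift m)} (Real.sqrt 3 / 2) := by
  obtain ⟨P, hP, hopt, hlb⟩ := key (Smat_herm m) (Jmat_herm m) (Jmat_sq m) (JSJ m)
  set t : ℝ := ((m - 1 : ℕ) : ℝ) with ht'
  have ht : 0 < t := by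
    rw [ht']
    have h0 : 0 < m - 1 := by omega
    exact_mod_cast h0
  have hfrob : ∀ M : Matrix (Fin m) (Fin m) ℂ, frob M = Real.sqrt (fsq M) := fun M => by
    rw [frob, fsq_eq_sum]
  have hfA : frob (downshift m) = Real.sqrt t := by rw [hfrob, fsq_downshift]
  have hsqrt_t : Real.sqrt t ≠ 0 := ne_of_gt (Real.sqrt_pos.mpr ht)
  have hdecomp : ∀ H : Matrix (Fin m) (Fin m) ℂ, H.PosSemidef →
      fsq (downshift m - H) = fsq (Smat m - H) + fsq (Kmat m) := by
    intro H hH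
    have h7 : downshift m - H = (Smat m - H) + Kmat m := by rw [← SK_eq m]; abel
    rw [h7, fsq_add_herm_skew ((Smat_herm m).sub hH.1) (Kmat_skew m)]
  have hval : fsq (Smat m) / 2 + fsq (Kmat m) = 3 / 4 * t := by
    rw [fsq_Smat, fsq_Kmat, ht']; ring
  have hkey34 : Real.sqrt (3 / 4 * t) = Real.sqrt 3 / 2 * Real.sqrt t := by
    rw [show (3:ℝ) / 4 * t = (Real.sqrt 3 / 2 * Real.sqrt t) ^ 2 by
      rw [mul_pow, div_pow, Real.sq_sqrt (by norm_num : (0:ℝ) ≤ 3), Real.sq_sqrt ht.le]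
      norm_num]
    exact Real.sqrt_sq (by positivity)
  constructor
  · refine ⟨P, hP, ?_⟩
    rw [hfrob, hdecomp P hP, hopt, hval, hkey34, hfA]
    field_simp
  · rintro d ⟨H, hH, rfl⟩
    rw [hfrob, hdecomp H hH, hfA]
    have h1 : 3 / 4 * t ≤ fsq (Smat m - H) + fsq (Kmat m) := by
      rw [← hval]
      have := hlb H hH
      linarith
    calc Real.sqrt 3 / 2 = Real.sqrt (3 / 4 * t) / Real.sqrt t := by
          rw [hkey34]; field_simp; try ring
      _ ≤ _ := by
          gcongr
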